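/- Let β > 0, μ > 0 and p ∈ ℕ. Then there exists a unique real number Λ in the open interval (μ² + π²(1+p)²/4, μ² + π²(2+p)²/4) such that, writing s = √(Λ − μ²), one has [β·s·sin s·cosh μ + (Λ·cosh μ + β·μ·sinh μ)·cos s] · [β·s·cos s·sinh μ − (Λ·sinh μ + β·μ·cosh μ)·sin s] = 0. -/

import Mathlib

open Real

noncomputable def Afun (β μ s : ℝ) : ℝ :=
  β * s * Real.sin s * Real.cosh μ +
    ((s ^ 2 + μ ^ 2) * Real.cosh μ + β * μ * Real.sinh μ) * Real.cos s

noncomputable def Bfun (β μ s : ℝ) : ℝ :=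
  β * s * Real.cos s * Real.sinh μ -
    ((s ^ 2 + μ ^ 2) * Real.sinh μ + β * μ * Real.cosh μ) * Real.sin s

noncomputable def hfun (β μ s : ℝ) : ℝ :=
  β * s * Real.tan s + s ^ 2 + μ ^ 2 + β * μ * (Real.sinh μ / Real.cosh μ)

noncomputable def gfun (β μ s : ℝ) : ℝ :=
  β * s * (Real.cos s / Real.sin s) - s ^ 2 - μ ^ 2 - β * μ * (Real.cosh μ / Real.sinh μ)

lemma contA (β μ : ℝ) : Continuous (Afun β μ) := by
  unfold Afun; continuity

lemma contB (β μ : ℝ) : Continuous (Bfun β μ) := by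
  unfold Bfun; continuity

lemma cos_nat_mul_pi (m : ℕ) : Real.cos ((m : ℝ) * π) = (-1) ^ m := by
  simpa using Real.cos_nat_mul_pi_sub 0 m

lemma Afac (β μ s : ℝ) (hc : Real.cos s ≠ 0) :
    Afun β μ s = Real.cos s * Real.cosh μ * hfun β μ s := by
  have hcosh := (Real.cosh_pos μ).ne'
  unfold Afun hfun
  rw [Real.tan_eq_sin_div_cos]
  field_simp
  ring

lemma Bfac (β μ s : ℝ) (hμ : 0 < μ) (hs : Real.sin s ≠ 0) :
    Bfun β μ s = Real.sin s * Real.sinh μ * gfun β μ s := by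
  have hsinh := (Real.sinh_pos_iff.2 hμ).ne'
  unfold Bfun gfun
  field_simp
  ring

lemma hderiv (β μ x : ℝ) (hc : Real.cos x ≠ 0) :
    HasDerivAt (hfun β μ) (β * Real.tan x + β * x * (1 / Real.cos x ^ 2) + 2 * x) x := by
  have h1 : HasDerivAt (fun y : ℝ => β * y * Real.tan y)
      (β * 1 * Real.tan x + β * x * (1 / Real.cos x ^ 2)) x :=
    ((hasDerivAt_id x).const_mul β).mul (Real.hasDerivAt_tan hc)
  have h2 : HasDerivAt (fun y : ℝ => y ^ 2) (2 * x) x := by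
    simpa using hasDerivAt_pow 2 x
  have h3 := ((h1.add h2).add_const (μ ^ 2)).add_const (β * μ * (Real.sinh μ / Real.cosh μ))
  rw [show β * Real.tan x + β * x * (1 / Real.cos x ^ 2) + 2 * x =
      β * 1 * Real.tan x + β * x * (1 / Real.cos x ^ 2) + 2 * x by ring]
  exact h3

lemma gderiv (β μ x : ℝ) (hs : Real.sin x ≠ 0) :
    HasDerivAt (gfun β μ)
      (β * 1 * (Real.cos x / Real.sin x) +
        β * x * ((-Real.sin x * Real.sin x - Real.cos x * Real.cos x) / Real.sin x ^ 2) - 2 * x) x := by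
  have h1 : HasDerivAt (fun y : ℝ => β * y * (Real.cos y / Real.sin y))
      (β * 1 * (Real.cos x / Real.sin x) +
        β * x * ((-Real.sin x * Real.sin x - Real.cos x * Real.cos x) / Real.sin x ^ 2)) x :=
    ((hasDerivAt_id x).const_mul β).mul ((Real.hasDerivAt_cos x).div (Real.hasDerivAt_sin x) hs)
  have h2 : HasDerivAt (fun y : ℝ => y ^ 2) (2 * x) x := by
    simpa using hasDerivAt_pow 2 x
  exact ((h1.sub h2).sub_const (μ ^ 2)).sub_const (β * μ * (Real.cosh μ / Real.sinh μ))

/-- Odd case: on `(mπ + π/2, (m+1)π)` the factor `A` has a unique zero and `B` never vanishes. -/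
lemma keyOdd (β μ : ℝ) (hβ : 0 < β) (hμ : 0 < μ) (m : ℕ) :
    ∃! s : ℝ, s ∈ Set.Ioo ((m : ℝ) * π + π / 2) (((m : ℝ) + 1) * π) ∧
      Afun β μ s * Bfun β μ s = 0 := by
  have hπ := Real.pi_pos
  have hπ3 := Real.pi_gt_three
  set a : ℝ := (m : ℝ) * π + π / 2 with ha_def
  set b : ℝ := ((m : ℝ) + 1) * π with hb_def
  have hm0 : (0 : ℝ) ≤ (m : ℝ) := Nat.cast_nonneg m
  have hab : a < b := by rw [ha_def, hb_def]; nlinarith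
  have ha1 : (1 : ℝ) < a := by rw [ha_def]; nlinarith
  have hcosh := Real.cosh_pos μ
  have hsinh := Real.sinh_pos_iff.2 hμ
  -- sign of sin·cos on the open interval
  have sincos : ∀ s ∈ Set.Ioo a b, Real.sin s * Real.cos s < 0 := by
    intro s hs
    have hy1 : 0 < 2 * s - ((2 * m + 1 : ℕ) : ℝ) * π := by
      push_cast; rw [ha_def] at hs; nlinarith [hs.1]
    have hy2 : 2 * s - ((2 * m + 1 : ℕ) : ℝ) * π < π := by
      push_cast; rw [hb_def] at hs; nlinarith [hs.2]
    have hsy : 0 < Real.sin (2 * s - ((2 * m + 1 : ℕ) : ℝ) * π) :=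
      Real.sin_pos_of_pos_of_lt_pi hy1 hy2
    have h2s : Real.sin (2 * s) < 0 := by
      have : Real.sin (2 * s) =
          Real.sin ((2 * s - ((2 * m + 1 : ℕ) : ℝ) * π + π) + m * (2 * π)) := by
        push_cast; ring_nf
      rw [this, Real.sin_add_nat_mul_two_pi, Real.sin_add_pi]
      linarith
    have := Real.sin_two_mul s
    nlinarith
  have hcosne : ∀ s ∈ Set.Ioo a b, Real.cos s ≠ 0 := by
    intro s hs hc
    have := sincos s hs
    rw [hc, mul_zero] at this
    exact lt_irrefl 0 this
  have hsinne : ∀ s ∈ Set.Ioo a b, Real.sin s ≠ 0 := by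
    intro s hs hc
    have := sincos s hs
    rw [hc, zero_mul] at this
    exact lt_irrefl 0 this
  -- B never vanishes
  have hBne : ∀ s ∈ Set.Ioo a b, Bfun β μ s ≠ 0 := by
    intro s hs hB0
    have h1 := sincos s hs
    have hs0 : (0 : ℝ) < s := lt_trans (by linarith) hs.1
    have hsin2 : 0 < Real.sin s ^ 2 := by
      have := hsinne s hs; positivity
    have hkey : Bfun β μ s * Real.sin s < 0 := by
      unfold Bfun
      have t1 : β * s * Real.cos s * Real.sinh μ * Real.sin s < 0 := by
        have : 0 < β * s * Real.sinh μ := by positivity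
        nlinarith
      have t2 : 0 < ((s ^ 2 + μ ^ 2) * Real.sinh μ + β * μ * Real.cosh μ) * Real.sin s ^ 2 := by
        have h2 : 0 < (s ^ 2 + μ ^ 2) * Real.sinh μ + β * μ * Real.cosh μ := by positivity
        positivity
      nlinarith
    rw [hB0, zero_mul] at hkey
    exact lt_irrefl 0 hkey
  -- A = cos · cosh · h and h is strictly monotone
  have hmono : StrictMonoOn (hfun β μ) (Set.Ioo a b) := by
    apply strictMonoOn_of_deriv_pos (convex_Ioo a b)
    · intro x hx
      exact ((hderiv β μ x (hcosne x hx)).continuousAt).continuousWithinAt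
    · intro x hx
      rw [interior_Ioo] at hx
      have hc := hcosne x hx
      rw [(hderiv β μ x hc).deriv]
      have hc2 : 0 < Real.cos x ^ 2 := by positivity
      have hx1 : 1 < x := lt_trans ha1 hx.1
      rw [Real.tan_eq_sin_div_cos]
      have heq : β * (Real.sin x / Real.cos x) + β * x * (1 / Real.cos x ^ 2) + 2 * x =
          (β * (Real.sin x * Real.cos x + x) + 2 * x * Real.cos x ^ 2) / Real.cos x ^ 2 := by
        field_simp
      rw [heq]
      apply div_pos _ hc2
      have h3 : 0 < Real.sin x * Real.cos x + x := by
        nlinarith [sq_nonneg (Real.sin x + Real.cos x), Real.sin_sq_add_cos_sq x]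
      have h4 : 0 < 2 * x * Real.cos x ^ 2 := by positivity
      linarith [mul_pos hβ h3]
  -- zeros of A on the interval are zeros of h
  have hAzero : ∀ s ∈ Set.Ioo a b, Afun β μ s = 0 → hfun β μ s = 0 := by
    intro s hs hA
    rw [Afac β μ s (hcosne s hs)] at hA
    rcases mul_eq_zero.1 hA with h | h
    · exact absurd (mul_eq_zero.1 h) (by push_neg; exact ⟨hcosne s hs, hcosh.ne'⟩)
    · exact h
  -- endpoint values
  have hsa : Real.sin a = (-1 : ℝ) ^ m := by
    rw [ha_def, Real.sin_add_pi_div_two, _root_.cos_nat_mul_pi]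
  have hca : Real.cos a = 0 := by
    rw [ha_def, Real.cos_add_pi_div_two, Real.sin_nat_mul_pi, neg_zero]
  have hsb : Real.sin b = 0 := by
    rw [hb_def, show ((m : ℝ) + 1) * π = ((m + 1 : ℕ) : ℝ) * π by push_cast; ring,
      Real.sin_nat_mul_pi]
  have hcb : Real.cos b = (-1 : ℝ) ^ (m + 1) := by
    rw [hb_def, show ((m : ℝ) + 1) * π = ((m + 1 : ℕ) : ℝ) * π by push_cast; ring,
      _root_.cos_nat_mul_pi]
  have Aa : Afun β μ a = β * a * Real.cosh μ * (-1 : ℝ) ^ m := by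
    unfold Afun; rw [hsa, hca]; ring
  have Ab : Afun β μ b = -(((b ^ 2 + μ ^ 2) * Real.cosh μ + β * μ * Real.sinh μ) * (-1 : ℝ) ^ m) := by
    unfold Afun; rw [hsb, hcb, pow_succ]; ring
  -- existence via IVT applied to ε·A
  set ε : ℝ := (-1 : ℝ) ^ m with hε_def
  have hε2 : ε * ε = 1 := by
    rw [hε_def, ← pow_add]
    exact Even.neg_one_pow ⟨m, rfl⟩
  have hεne : ε ≠ 0 := by
    intro h
    rw [h] at hε2; norm_num at hε2
  have hfa : ε * Afun β μ a = β * a * Real.cosh μ := by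
    rw [Aa]; linear_combination β * a * Real.cosh μ * hε2
  have hfb : ε * Afun β μ b = -((b ^ 2 + μ ^ 2) * Real.cosh μ + β * μ * Real.sinh μ) := by
    rw [Ab]; linear_combination (-((b ^ 2 + μ ^ 2) * Real.cosh μ + β * μ * Real.sinh μ)) * hε2
  have hfapos : 0 < ε * Afun β μ a := by
    rw [hfa]
    have : 0 < a := by linarith
    positivity
  have hfbneg : ε * Afun β μ b < 0 := by
    rw [hfb]
    have hb0 : 0 < b := by rw [hb_def]; nlinarith
    have : 0 < (b ^ 2 + μ ^ 2) * Real.cosh μ + β * μ * Real.sinh μ := by positivity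
    linarith
  have hcont : ContinuousOn (fun s => ε * Afun β μ s) (Set.Icc a b) :=
    (continuous_const.mul (contA β μ)).continuousOn
  have hmem : (0 : ℝ) ∈ Set.Ioo (ε * Afun β μ b) (ε * Afun β μ a) := ⟨hfbneg, hfapos⟩
  obtain ⟨s₀, hs₀, hfs₀⟩ := intermediate_value_Ioo' hab.le hcont hmem
  have hA₀ : Afun β μ s₀ = 0 := by
    rcases mul_eq_zero.1 hfs₀ with h | h
    · exact absurd h hεne
    · exact h
  refine ⟨s₀, ⟨hs₀, by rw [hA₀, zero_mul]⟩, ?_⟩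
  intro y ⟨hy, hy0⟩
  have hAy : Afun β μ y = 0 := by
    rcases mul_eq_zero.1 hy0 with h | h
    · exact h
    · exact absurd h (hBne y hy)
  exact hmono.injOn hy hs₀ (by rw [hAzero y hy hAy, hAzero s₀ hs₀ hA₀])

set_option maxHeartbeats 1000000 in
/-- Even case: on `(mπ, mπ + π/2)` with `m ≥ 1` the factor `B` has a unique zero
and `A` never vanishes. -/
lemma keyEven (β μ : ℝ) (hβ : 0 < β) (hμ : 0 < μ) (m : ℕ) (hm : 1 ≤ m) :
    ∃! s : ℝ, s ∈ Set.Ioo ((m : ℝ) * π) ((m : ℝ) * π + π / 2) ∧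
      Afun β μ s * Bfun β μ s = 0 := by
  have hπ := Real.pi_pos
  have hπ3 := Real.pi_gt_three
  set a : ℝ := (m : ℝ) * π with ha_def
  set b : ℝ := (m : ℝ) * π + π / 2 with hb_def
  have hm1 : (1 : ℝ) ≤ (m : ℝ) := by exact_mod_cast hm
  have hab : a < b := by rw [ha_def, hb_def]; linarith
  have ha3 : (3 : ℝ) < a := by rw [ha_def]; nlinarith
  have hcosh := Real.cosh_pos μ
  have hsinh := Real.sinh_pos_iff.2 hμ
  have sincos : ∀ s ∈ Set.Ioo a b, 0 < Real.sin s * Real.cos s := by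
    intro s hs
    have hy1 : 0 < 2 * s - (m : ℝ) * (2 * π) := by rw [ha_def] at hs; nlinarith [hs.1]
    -- (cleanup)
    have hy2 : 2 * s - (m : ℝ) * (2 * π) < π := by rw [hb_def] at hs; nlinarith [hs.2]
    have hsy : 0 < Real.sin (2 * s - (m : ℝ) * (2 * π)) :=
      Real.sin_pos_of_pos_of_lt_pi hy1 hy2
    have h2s : 0 < Real.sin (2 * s) := by
      have : Real.sin (2 * s) = Real.sin (2 * s - (m : ℝ) * (2 * π) + (m : ℕ) * (2 * π)) := by
        push_cast; ring_nf
      rw [this, Real.sin_add_nat_mul_two_pi]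
      exact hsy
    have := Real.sin_two_mul s
    nlinarith
  have hcosne : ∀ s ∈ Set.Ioo a b, Real.cos s ≠ 0 := by
    intro s hs hc
    have := sincos s hs
    rw [hc, mul_zero] at this
    exact lt_irrefl 0 this
  have hsinne : ∀ s ∈ Set.Ioo a b, Real.sin s ≠ 0 := by
    intro s hs hc
    have := sincos s hs
    rw [hc, zero_mul] at this
    exact lt_irrefl 0 this
  -- A never vanishes
  have hAne : ∀ s ∈ Set.Ioo a b, Afun β μ s ≠ 0 := by
    intro s hs hA0
    have h1 := sincos s hs
    have hs0 : (0 : ℝ) < s := lt_trans (by linarith) hs.1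
    have hcos2 : 0 < Real.cos s ^ 2 := by
      have := hcosne s hs; positivity
    have hkey : 0 < Afun β μ s * Real.cos s := by
      unfold Afun
      have t1 : 0 < β * s * Real.sin s * Real.cosh μ * Real.cos s := by
        have : 0 < β * s * Real.cosh μ := by positivity
        nlinarith
      have t2 : 0 < ((s ^ 2 + μ ^ 2) * Real.cosh μ + β * μ * Real.sinh μ) * Real.cos s ^ 2 := by
        have h2 : 0 < (s ^ 2 + μ ^ 2) * Real.cosh μ + β * μ * Real.sinh μ := by positivity
        positivity
      nlinarith
    rw [hA0, zero_mul] at hkey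
    exact lt_irrefl 0 hkey
  -- B = sin · sinh · g and g is strictly antitone
  have hanti : StrictAntiOn (gfun β μ) (Set.Ioo a b) := by
    apply strictAntiOn_of_deriv_neg (convex_Ioo a b)
    · intro x hx
      exact ((gderiv β μ x (hsinne x hx)).continuousAt).continuousWithinAt
    · intro x hx
      rw [interior_Ioo] at hx
      have hsx := hsinne x hx
      rw [(gderiv β μ x hsx).deriv]
      have hs2 : 0 < Real.sin x ^ 2 := by positivity
      have hx3 : 3 < x := lt_trans ha3 hx.1
      have hone : -Real.sin x * Real.sin x - Real.cos x * Real.cos x = -1 := by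
        nlinarith [Real.sin_sq_add_cos_sq x]
      have heq : β * 1 * (Real.cos x / Real.sin x) +
          β * x * ((-Real.sin x * Real.sin x - Real.cos x * Real.cos x) / Real.sin x ^ 2) - 2 * x =
          (β * (Real.cos x * Real.sin x - x) - 2 * x * Real.sin x ^ 2) / Real.sin x ^ 2 := by
        rw [hone]; field_simp; ring
      rw [heq]
      apply div_neg_of_neg_of_pos _ hs2
      have h2 : Real.cos x * Real.sin x - x < 0 := by
        nlinarith [sq_nonneg (Real.sin x - Real.cos x), Real.sin_sq_add_cos_sq x]
      have h3 : 0 < 2 * x * Real.sin x ^ 2 := by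
        have : (0 : ℝ) < x := by linarith
        positivity
      linarith [mul_neg_of_pos_of_neg hβ h2]
  have hBzero : ∀ s ∈ Set.Ioo a b, Bfun β μ s = 0 → gfun β μ s = 0 := by
    intro s hs hB
    rw [Bfac β μ s hμ (hsinne s hs)] at hB
    rcases mul_eq_zero.1 hB with h | h
    · exact absurd (mul_eq_zero.1 h) (by push_neg; exact ⟨hsinne s hs, hsinh.ne'⟩)
    · exact h
  -- endpoint values
  have hsa : Real.sin a = 0 := by rw [ha_def, Real.sin_nat_mul_pi]
  have hca : Real.cos a = (-1 : ℝ) ^ m := by rw [ha_def, _root_.cos_nat_mul_pi]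
  have hsb : Real.sin b = (-1 : ℝ) ^ m := by
    rw [hb_def, Real.sin_add_pi_div_two, _root_.cos_nat_mul_pi]
  have hcb : Real.cos b = 0 := by
    rw [hb_def, Real.cos_add_pi_div_two, Real.sin_nat_mul_pi, neg_zero]
  have Ba : Bfun β μ a = β * a * Real.sinh μ * (-1 : ℝ) ^ m := by
    unfold Bfun; rw [hsa, hca]; ring
  have Bb : Bfun β μ b = -(((b ^ 2 + μ ^ 2) * Real.sinh μ + β * μ * Real.cosh μ) * (-1 : ℝ) ^ m) := by
    unfold Bfun; rw [hsb, hcb]; ring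
  set ε : ℝ := (-1 : ℝ) ^ m with hε_def
  have hε2 : ε * ε = 1 := by
    rw [hε_def, ← pow_add]
    exact Even.neg_one_pow ⟨m, rfl⟩
  have hεne : ε ≠ 0 := by
    intro h; rw [h] at hε2; norm_num at hε2
  have hfa : ε * Bfun β μ a = β * a * Real.sinh μ := by
    rw [Ba]; linear_combination β * a * Real.sinh μ * hε2
  have hfb : ε * Bfun β μ b = -((b ^ 2 + μ ^ 2) * Real.sinh μ + β * μ * Real.cosh μ) := by
    rw [Bb]; linear_combination (-((b ^ 2 + μ ^ 2) * Real.sinh μ + β * μ * Real.cosh μ)) * hε2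
  have hfapos : 0 < ε * Bfun β μ a := by
    rw [hfa]
    have : 0 < a := by linarith
    positivity
  have hfbneg : ε * Bfun β μ b < 0 := by
    rw [hfb]
    have hb0 : 0 < b := by linarith
    have : 0 < (b ^ 2 + μ ^ 2) * Real.sinh μ + β * μ * Real.cosh μ := by positivity
    linarith
  have hcont : ContinuousOn (fun s => ε * Bfun β μ s) (Set.Icc a b) :=
    (continuous_const.mul (contB β μ)).continuousOn
  have hmem : (0 : ℝ) ∈ Set.Ioo (ε * Bfun β μ b) (ε * Bfun β μ a) := ⟨hfbneg, hfapos⟩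
  obtain ⟨s₀, hs₀, hfs₀⟩ := intermediate_value_Ioo' hab.le hcont hmem
  have hB₀ : Bfun β μ s₀ = 0 := by
    rcases mul_eq_zero.1 hfs₀ with h | h
    · exact absurd h hεne
    · exact h
  refine ⟨s₀, ⟨hs₀, by rw [hB₀, mul_zero]⟩, ?_⟩
  intro y ⟨hy, hy0⟩
  have hBy : Bfun β μ y = 0 := by
    rcases mul_eq_zero.1 hy0 with h | h
    · exact absurd h (hAne y hy)
    · exact h
  exact hanti.injOn hy hs₀ (by rw [hBzero y hy hBy, hBzero s₀ hs₀ hB₀])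

/-- Combined key lemma in the variable `s`. -/
lemma key (β μ : ℝ) (hβ : 0 < β) (hμ : 0 < μ) (k : ℕ) (hk : 1 ≤ k) :
    ∃! s : ℝ, s ∈ Set.Ioo ((k : ℝ) * π / 2) (((k : ℝ) + 1) * π / 2) ∧
      Afun β μ s * Bfun β μ s = 0 := by
  obtain ⟨m, rfl | rfl⟩ := Nat.even_or_odd' k
  · -- k = 2m, m ≥ 1
    have hm : 1 ≤ m := by omega
    have e1 : ((2 * m : ℕ) : ℝ) * π / 2 = (m : ℝ) * π := by push_cast; ring
    have e2 : (((2 * m : ℕ) : ℝ) + 1) * π / 2 = (m : ℝ) * π + π / 2 := by push_cast; ring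
    rw [e1, e2]
    exact keyEven β μ hβ hμ m hm
  · -- k = 2m + 1
    have e1 : ((2 * m + 1 : ℕ) : ℝ) * π / 2 = (m : ℝ) * π + π / 2 := by push_cast; ring
    have e2 : (((2 * m + 1 : ℕ) : ℝ) + 1) * π / 2 = ((m : ℝ) + 1) * π := by push_cast; ring
    rw [e1, e2]
    exact keyOdd β μ hβ hμ m

/-- For β > 0, μ > 0 and p ∈ ℕ there is a unique eigenvalue Λ in
(μ² + π²(1+p)²/4, μ² + π²(2+p)²/4) satisfying, with s = √(Λ − μ²),
[β s sin s cosh μ + (Λ cosh μ + β μ sinh μ) cos s]·[β s cos s sinh μ − (Λ sinh μ + β μ cosh μ) sin s] = 0. -/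
theorem stmt_1 (β μ : ℝ) (hβ : 0 < β) (hμ : 0 < μ) (p : ℕ) :
    ∃! Λ : ℝ,
      Λ ∈ Set.Ioo (μ ^ 2 + π ^ 2 * (1 + (p : ℝ)) ^ 2 / 4)
        (μ ^ 2 + π ^ 2 * (2 + (p : ℝ)) ^ 2 / 4) ∧
      (β * Real.sqrt (Λ - μ ^ 2) * Real.sin (Real.sqrt (Λ - μ ^ 2)) * Real.cosh μ +
          (Λ * Real.cosh μ + β * μ * Real.sinh μ) * Real.cos (Real.sqrt (Λ - μ ^ 2))) *
        (β * Real.sqrt (Λ - μ ^ 2) * Real.cos (Real.sqrt (Λ - μ ^ 2)) * Real.sinh μ -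
          (Λ * Real.sinh μ + β * μ * Real.cosh μ) * Real.sin (Real.sqrt (Λ - μ ^ 2))) = 0 := by
  have hπ := Real.pi_pos
  set k : ℕ := p + 1 with hk_def
  set a : ℝ := (k : ℝ) * π / 2 with ha_def
  set b : ℝ := ((k : ℝ) + 1) * π / 2 with hb_def
  have ha0 : 0 < a := by
    rw [ha_def]
    have : (1 : ℝ) ≤ (k : ℝ) := by exact_mod_cast Nat.one_le_iff_ne_zero.2 (by omega)
    nlinarith
  have hlo : μ ^ 2 + π ^ 2 * (1 + (p : ℝ)) ^ 2 / 4 = μ ^ 2 + a ^ 2 := by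
    rw [ha_def, hk_def]; push_cast; ring
  have hhi : μ ^ 2 + π ^ 2 * (2 + (p : ℝ)) ^ 2 / 4 = μ ^ 2 + b ^ 2 := by
    rw [hb_def, hk_def]; push_cast; ring
  obtain ⟨s₀, ⟨hs₀, hAB₀⟩, huniq⟩ := key β μ hβ hμ k (by omega)
  have hs₀0 : 0 < s₀ := lt_trans ha0 hs₀.1
  refine ⟨s₀ ^ 2 + μ ^ 2, ⟨?_, ?_⟩, ?_⟩
  · rw [hlo, hhi]
    constructor
    · have := hs₀.1; nlinarith
    · have := hs₀.2; nlinarith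
  · have hsqrt : Real.sqrt (s₀ ^ 2 + μ ^ 2 - μ ^ 2) = s₀ := by
      rw [show s₀ ^ 2 + μ ^ 2 - μ ^ 2 = s₀ ^ 2 by ring, Real.sqrt_sq hs₀0.le]
    rw [hsqrt]
    have : (s₀ ^ 2 + μ ^ 2) * Real.cosh μ = (s₀ ^ 2 + μ ^ 2) * Real.cosh μ := rfl
    calc (β * s₀ * Real.sin s₀ * Real.cosh μ +
          ((s₀ ^ 2 + μ ^ 2) * Real.cosh μ + β * μ * Real.sinh μ) * Real.cos s₀) *
        (β * s₀ * Real.cos s₀ * Real.sinh μ -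
          ((s₀ ^ 2 + μ ^ 2) * Real.sinh μ + β * μ * Real.cosh μ) * Real.sin s₀)
        = Afun β μ s₀ * Bfun β μ s₀ := rfl
      _ = 0 := hAB₀
  · rintro Λ ⟨hΛmem, hΛ0⟩
    rw [hlo, hhi] at hΛmem
    set s : ℝ := Real.sqrt (Λ - μ ^ 2) with hs_def
    have hΛa : a ^ 2 < Λ - μ ^ 2 := by have := hΛmem.1; linarith
    have hΛb : Λ - μ ^ 2 < b ^ 2 := by have := hΛmem.2; linarith
    have hΛpos : 0 < Λ - μ ^ 2 := lt_trans (by positivity) hΛa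
    have hs2 : s ^ 2 = Λ - μ ^ 2 := Real.sq_sqrt hΛpos.le
    have hsa : a < s := by
      rw [hs_def]
      have := Real.sqrt_lt_sqrt (by positivity) hΛa
      rwa [Real.sqrt_sq ha0.le] at this
    have hsb : s < b := by
      rw [hs_def]
      have hb0 : 0 < b := by
        rw [hb_def]
        have : (0 : ℝ) ≤ (k : ℝ) := Nat.cast_nonneg k
        nlinarith
      have := Real.sqrt_lt_sqrt hΛpos.le hΛb
      rwa [Real.sqrt_sq hb0.le] at this
    have hΛeq : Λ = s ^ 2 + μ ^ 2 := by rw [hs2]; ring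
    have hABs : Afun β μ s * Bfun β μ s = 0 := by
      rw [← hΛ0]
      unfold Afun Bfun
      rw [hΛeq]
    have := huniq s ⟨⟨hsa, hsb⟩, hABs⟩
    rw [hΛeq, this]
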